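/- If X and Y are T1 spaces and K ⊆ X × Y is compact in the cross-topology, then there exists a countable set A ⊆ X × Y such that K ⊆ cross(A), where cross(A) = ⋃_{(x,y)∈A} (({x} × Y) ∪ (X × {y})). -/

import Mathlib

open Set Filter Topology

def crossOpen {X Y : Type*} [TopologicalSpace X] [TopologicalSpace Y] (A : Set (X × Y)) : Prop :=
  ∀ p ∈ A, ∃ U ∈ nhds p.1, ∃ V ∈ nhds p.2, ({p.1} ×ˢ V) ∪ (U ×ˢ {p.2}) ⊆ A

def crossTopology (X Y : Type*) [TopologicalSpace X] [TopologicalSpace Y] :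
    TopologicalSpace (X × Y) where
  IsOpen := crossOpen
  isOpen_univ := fun p _ => ⟨Set.univ, Filter.univ_mem, Set.univ, Filter.univ_mem, Set.subset_univ _⟩
  isOpen_inter := by
    rintro A B hA hB p hp
    obtain ⟨U1, hU1, V1, hV1, h1⟩ := hA p hp.1
    obtain ⟨U2, hU2, V2, hV2, h2⟩ := hB p hp.2
    refine ⟨U1 ∩ U2, Filter.inter_mem hU1 hU2, V1 ∩ V2, Filter.inter_mem hV1 hV2, ?_⟩
    rintro q (hq | hq)
    · exact ⟨h1 (Or.inl ⟨hq.1, hq.2.1⟩), h2 (Or.inl ⟨hq.1, hq.2.2⟩)⟩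
    · exact ⟨h1 (Or.inr ⟨hq.1.1, hq.2⟩), h2 (Or.inr ⟨hq.1.2, hq.2⟩)⟩
  isOpen_sUnion := by
    rintro S hS p hp
    obtain ⟨A, hAS, hpA⟩ := hp
    obtain ⟨U, hU, V, hV, h⟩ := hS A hAS p hpA
    exact ⟨U, hU, V, hV, h.trans (Set.subset_sUnion_of_mem hAS)⟩

def crossSet {X Y : Type*} (E : Set (X × Y)) : Set (X × Y) :=
  {q | ∃ p ∈ E, q.1 = p.1 ∨ q.2 = p.2}



lemma crossOpen_compl_of_inj {X Y : Type*} [TopologicalSpace X] [TopologicalSpace Y]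
    [T1Space X] [T1Space Y] (C : Set (X × Y))
    (h1 : ∀ c ∈ C, ∀ c' ∈ C, c.1 = c'.1 → c = c')
    (h2 : ∀ c ∈ C, ∀ c' ∈ C, c.2 = c'.2 → c = c') :
    crossOpen Cᶜ := by
  intro q hq
  have hV : ∃ V ∈ 𝓝 q.2, ∀ c ∈ C, c.1 = q.1 → c.2 ∉ V := by
    by_cases hx : ∃ c ∈ C, c.1 = q.1
    · obtain ⟨c, hc, hc1⟩ := hx
      have hne : q.2 ≠ c.2 := by
        intro h
        exact hq (by rwa [show c = q from Prod.ext hc1 h.symm] at hc)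
      refine ⟨{c.2}ᶜ, isOpen_compl_singleton.mem_nhds (by simpa using hne), ?_⟩
      intro c' hc' h1'
      have : c' = c := h1 c' hc' c hc (h1'.trans hc1.symm)
      simp [this]
    · exact ⟨Set.univ, Filter.univ_mem, fun c hc h _ => hx ⟨c, hc, h⟩⟩
  have hU : ∃ U ∈ 𝓝 q.1, ∀ c ∈ C, c.2 = q.2 → c.1 ∉ U := by
    by_cases hx : ∃ c ∈ C, c.2 = q.2
    · obtain ⟨c, hc, hc2⟩ := hx
      have hne : q.1 ≠ c.1 := by
        intro h
        exact hq (by rwa [show c = q from Prod.ext h.symm hc2] at hc)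
      refine ⟨{c.1}ᶜ, isOpen_compl_singleton.mem_nhds (by simpa using hne), ?_⟩
      intro c' hc' h2'
      have : c' = c := h2 c' hc' c hc (h2'.trans hc2.symm)
      simp [this]
    · exact ⟨Set.univ, Filter.univ_mem, fun c hc h _ => hx ⟨c, hc, h⟩⟩
  obtain ⟨V, hVm, hVp⟩ := hV
  obtain ⟨U, hUm, hUp⟩ := hU
  refine ⟨U, hUm, V, hVm, ?_⟩
  rintro r (⟨hr1, hr2⟩ | ⟨hr1, hr2⟩) hrC
  · exact hVp r hrC (by simpa using hr1) hr2
  · exact hUp r hrC (by simpa using hr2) hr1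

theorem gamma_compact_subset_countable_cross {X Y : Type*}
    [TopologicalSpace X] [TopologicalSpace Y] [T1Space X] [T1Space Y]
    (K : Set (X × Y)) (hK : @IsCompact (X × Y) (crossTopology X Y) K) :
    ∃ A : Set (X × Y), A.Countable ∧ K ⊆ crossSet A := by
  by_contra hcon
  push_neg at hcon
  have hstep : ∀ A : Set (X × Y), A.Countable → ∃ q, q ∈ K ∧ q ∉ crossSet A := by
    intro A hA
    obtain ⟨q, hq1, hq2⟩ := Set.not_subset.mp (hcon A hA)
    exact ⟨q, hq1, hq2⟩
  set g : List (X × Y) → X × Y :=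
    fun L => (hstep {q | q ∈ L} L.finite_toSet.countable).choose with hgdef
  have hg : ∀ L : List (X × Y), g L ∈ K ∧ g L ∉ crossSet {q | q ∈ L} :=
    fun L => (hstep {q | q ∈ L} L.finite_toSet.countable).choose_spec
  set l : ℕ → List (X × Y) := fun n => Nat.rec [] (fun _ L => L ++ [g L]) n with hldef
  set p : ℕ → X × Y := fun n => g (l n) with hpdef
  have hlsucc : ∀ n, l (n + 1) = l n ++ [p n] := fun n => rfl
  have hmem : ∀ m n, m < n → p m ∈ l n := by
    intro m n h
    induction n with
    | zero => omega
    | succ k ih =>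
      rw [hlsucc]
      rcases Nat.lt_succ_iff_lt_or_eq.mp h with h' | h'
      · exact List.mem_append_left _ (ih h')
      · subst h'; exact List.mem_append_right _ (List.mem_singleton.mpr rfl)
  have haux : ∀ m n, m < n → (p n).1 ≠ (p m).1 ∧ (p n).2 ≠ (p m).2 := by
    intro m n h
    have hnot := (hg (l n)).2
    constructor
    · intro heq; exact hnot ⟨p m, hmem m n h, Or.inl heq⟩
    · intro heq; exact hnot ⟨p m, hmem m n h, Or.inr heq⟩
  have hC1 : ∀ c ∈ Set.range p, ∀ c' ∈ Set.range p, c.1 = c'.1 → c = c' := by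
    rintro c ⟨m, rfl⟩ c' ⟨n, rfl⟩ h
    rcases lt_trichotomy m n with hmn | hmn | hmn
    · exact absurd h.symm (haux m n hmn).1
    · rw [hmn]
    · exact absurd h (haux n m hmn).1
  have hC2 : ∀ c ∈ Set.range p, ∀ c' ∈ Set.range p, c.2 = c'.2 → c = c' := by
    rintro c ⟨m, rfl⟩ c' ⟨n, rfl⟩ h
    rcases lt_trichotomy m n with hmn | hmn | hmn
    · exact absurd h.symm (haux m n hmn).2
    · rw [hmn]
    · exact absurd h (haux n m hmn).2
  have hpK : ∀ n, p n ∈ K := fun n => (hg (l n)).1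
  have hle : Filter.map p atTop ≤ Filter.principal K := by
    rw [Filter.le_principal_iff, Filter.mem_map]
    exact Filter.Eventually.of_forall hpK
  obtain ⟨x, hxK, hx⟩ := hK hle
  set T : Set (X × Y) := Set.range p \ {x} with hTdef
  have hTopen : crossOpen Tᶜ :=
    crossOpen_compl_of_inj T (fun c hc c' hc' h => hC1 c hc.1 c' hc'.1 h)
      (fun c hc c' hc' h => hC2 c hc.1 c' hc'.1 h)
  have hxT : x ∈ Tᶜ := fun h => h.2 rfl
  have hTopen' : @IsOpen _ (crossTopology X Y) Tᶜ := hTopen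
  have hTnhds : Tᶜ ∈ @nhds _ (crossTopology X Y) x :=
    @IsOpen.mem_nhds _ (crossTopology X Y) x Tᶜ hTopen' hxT
  have key : ∀ N : ℕ, ∃ n ≥ N, p n = x := by
    intro N
    have hV : p '' Set.Ici N ∈ Filter.map p atTop := by
      rw [Filter.mem_map]
      exact Filter.mem_of_superset (Filter.Ici_mem_atTop N)
        (fun n hn => Set.mem_image_of_mem p hn)
    have hne := ((@clusterPt_iff_nonempty _ (crossTopology X Y) x _).mp hx) hTnhds hV
    obtain ⟨r, hr1, n, hn, rfl⟩ := hne
    refine ⟨n, hn, ?_⟩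
    by_contra hne'
    exact hr1 ⟨⟨n, rfl⟩, hne'⟩
  obtain ⟨n0, _, h0⟩ := key 0
  obtain ⟨n1, hn1, h1⟩ := key (n0 + 1)
  have : (p n1).1 ≠ (p n0).1 := (haux n0 n1 (by omega)).1
  rw [h0, h1] at this
  exact this rfl
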